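/- (Derivative formula for B-splines, property P3 with r = 1.) Let the knot vector be strictly increasing, let d ≥ 2, let 0 ≤ i ≤ m − d, and let t be a point that is not a knot, lying in some open interval (τ_j, τ_{j+1}). Then B_{i,d} is differentiable at t and its derivative satisfies B'_{i,d}(t) = (d − 1)·( B_{i,d−1}(t)/(τ_{i+d−1} − τ_i) − B_{i+1,d−1}(t)/(τ_{i+d} − τ_{i+1}) ); in particular the derivative of an order-d B-spline basis function is a linear combination of order-(d−1) B-spline basis functions. -/

import Mathlib

set_option maxHeartbeats 2000000


/-- Cox–de Boor B-spline basis function `B_{i,d}(t)` of order `d` for the knot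
vector `τ`.  In Lean, division by zero yields zero, which matches the standard
convention that any term of the recursion whose denominator vanishes is taken
to be zero. -/
noncomputable def bspline (τ : ℕ → ℝ) : ℕ → ℕ → ℝ → ℝ
  | 0, _, _ => 0
  | 1, i, t => if τ i ≤ t ∧ t < τ (i + 1) then 1 else 0
  | d + 2, i, t =>
      (t - τ i) / (τ (i + d + 1) - τ i) * bspline τ (d + 1) i t
      + (τ (i + d + 2) - t) / (τ (i + d + 2) - τ (i + 1)) * bspline τ (d + 1) (i + 1) t
-- order-1 spline has derivative 0 away from its two knots
lemma bspline_one_deriv (τ : ℕ → ℝ) (i : ℕ) (t : ℝ) (h0 : τ i ≠ t) (h1 : τ (i+1) ≠ t) :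
    HasDerivAt (bspline τ 1 i) 0 t := by
  have heq : bspline τ 1 i =ᶠ[nhds t] fun _ => bspline τ 1 i t := by
    by_cases hc : τ i ≤ t ∧ t < τ (i+1)
    · have hmem : Set.Ioo (τ i) (τ (i+1)) ∈ nhds t :=
        isOpen_Ioo.mem_nhds ⟨lt_of_le_of_ne hc.1 h0, hc.2⟩
      filter_upwards [hmem] with s hs
      simp [bspline, hc, hs.1.le, hs.2]
    · rcases lt_or_ge t (τ i) with h | h
      · have hmem : Set.Iio (τ i) ∈ nhds t := isOpen_Iio.mem_nhds h
        filter_upwards [hmem] with s hs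
        have hs' : ¬ (τ i ≤ s ∧ s < τ (i+1)) := fun h' => absurd h'.1 (not_le.2 hs)
        simp [bspline, hs', hc]
      · have h' : τ (i+1) < t := by
          rcases lt_or_ge t (τ (i+1)) with h2 | h2
          · exact absurd ⟨h, h2⟩ hc
          · exact lt_of_le_of_ne h2 h1
        have hmem : Set.Ioi (τ (i+1)) ∈ nhds t := isOpen_Ioi.mem_nhds h'
        filter_upwards [hmem] with s hs
        have hs' : ¬ (τ i ≤ s ∧ s < τ (i+1)) := fun h2 => absurd hs (not_lt.2 h2.2.le)
        simp [bspline, hs', hc]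
  exact (hasDerivAt_const t _).congr_of_eventuallyEq heq


/-- property P3 for r = 1: at any point that is not a knot, the
order-`d` B-spline basis function is differentiable and its derivative is the
stated linear combination of order-`(d-1)` basis functions. -/
theorem bspline_deriv (m d i j : ℕ) (τ : ℕ → ℝ)
    (hτ : ∀ l, l < m → τ l < τ (l + 1))
    (hd : 2 ≤ d) (hi : i + d ≤ m) (hj : j < m)
    (t : ℝ) (ht : t ∈ Set.Ioo (τ j) (τ (j + 1))) :
    HasDerivAt (bspline τ d i)
      (((d : ℝ) - 1) *
        (bspline τ (d - 1) i t / (τ (i + d - 1) - τ i)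
          - bspline τ (d - 1) (i + 1) t / (τ (i + d) - τ (i + 1)))) t := by
  -- strict monotonicity on indices ≤ m
  have hlt : ∀ p q, p < q → q ≤ m → τ p < τ q := by
    intro p q hpq hqm
    induction q with
    | zero => omega
    | succ n ih =>
      rcases Nat.lt_or_ge p n with h | h
      · exact lt_trans (ih h (by omega)) (hτ n (by omega))
      · have : p = n := by omega
        subst this; exact hτ p (by omega)
  -- t is not any knot with index ≤ m
  have hne : ∀ l, l ≤ m → τ l ≠ t := by
    intro l hl
    rcases Nat.lt_or_ge l (j+1) with h | h
    · rcases Nat.eq_or_lt_of_le (by omega : l ≤ j) with h' | h'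
      · subst h'; exact ne_of_lt ht.1
      · exact ne_of_lt (lt_trans (hlt l j h' (by omega)) ht.1)
    · rcases Nat.eq_or_lt_of_le h with h' | h'
      · rw [← h']; exact ne_of_gt ht.2
      · exact ne_of_gt (lt_trans ht.2 (hlt (j+1) l h' hl))
  -- main induction: all orders ≥ 2
  have key : ∀ d' i', i' + d' + 2 ≤ m →
      HasDerivAt (bspline τ (d'+2) i')
        (((d' : ℝ) + 1) *
          (bspline τ (d'+1) i' t / (τ (i'+d'+1) - τ i')
            - bspline τ (d'+1) (i'+1) t / (τ (i'+d'+2) - τ (i'+1)))) t := by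
    intro d'
    induction d' with
    | zero =>
      intro i' him
      have hA : HasDerivAt (fun s => (s - τ i') / (τ (i'+1) - τ i'))
          (1 / (τ (i'+1) - τ i')) t := by
        simpa using ((hasDerivAt_id t).sub_const (τ i')).div_const (τ (i'+1) - τ i')
      have hB : HasDerivAt (fun s => (τ (i'+2) - s) / (τ (i'+2) - τ (i'+1)))
          (-1 / (τ (i'+2) - τ (i'+1))) t := by
        simpa using ((hasDerivAt_const t (τ (i'+2))).sub (hasDerivAt_id t)).div_const
          (τ (i'+2) - τ (i'+1))
      have h0 := bspline_one_deriv τ i' t (hne i' (by omega)) (hne (i'+1) (by omega))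
      have h1 := bspline_one_deriv τ (i'+1) t (hne (i'+1) (by omega)) (hne (i'+2) (by omega))
      have hP := (hA.mul h0).add (hB.mul h1)
      have hfe : (fun s => (s - τ i') / (τ (i'+1) - τ i') * bspline τ 1 i' s
          + (τ (i'+2) - s) / (τ (i'+2) - τ (i'+1)) * bspline τ 1 (i'+1) s)
          = bspline τ (0+2) i' := by
        funext s; simp [bspline]
      rw [← hfe]
      refine hP.congr_deriv ?_
      have d1 : τ (i'+1) - τ i' ≠ 0 := sub_ne_zero.2 (ne_of_gt (hlt i' (i'+1) (by omega) (by omega)))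
      have d2 : τ (i'+2) - τ (i'+1) ≠ 0 := sub_ne_zero.2 (ne_of_gt (hlt (i'+1) (i'+2) (by omega) (by omega)))
      field_simp
      ring
    | succ d ih =>
      intro i' him
      simp only [show d+1+1 = d+2 from by omega, show d+1+2 = d+3 from by omega,
        show ∀ a:ℕ, a+(d+1)+1 = a+d+2 from by omega, show ∀ a:ℕ, a+(d+1)+2 = a+d+3 from by omega]
      have hi0 := ih i' (by omega)
      have hi1 := ih (i'+1) (by omega)
      rw [show i'+1+d+1 = i'+d+2 from by omega, show i'+1+d+2 = i'+d+3 from by omega,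
        show i'+1+1 = i'+2 from rfl] at hi1
      have hA : HasDerivAt (fun s => (s - τ i') / (τ (i'+d+2) - τ i'))
          (1 / (τ (i'+d+2) - τ i')) t := by
        simpa using ((hasDerivAt_id t).sub_const (τ i')).div_const (τ (i'+d+2) - τ i')
      have hB : HasDerivAt (fun s => (τ (i'+d+3) - s) / (τ (i'+d+3) - τ (i'+1)))
          (-1 / (τ (i'+d+3) - τ (i'+1))) t := by
        simpa using ((hasDerivAt_const t (τ (i'+d+3))).sub (hasDerivAt_id t)).div_const
          (τ (i'+d+3) - τ (i'+1))
      have hP := (hA.mul hi0).add (hB.mul hi1)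
      have hfe : ∀ s, bspline τ (d+3) i' s
          = (s - τ i') / (τ (i'+d+2) - τ i') * bspline τ (d+2) i' s
            + (τ (i'+d+3) - s) / (τ (i'+d+3) - τ (i'+1)) * bspline τ (d+2) (i'+1) s := by
        intro s
        have h : bspline τ (d+1+2) i' s
            = (s - τ i') / (τ (i'+(d+1)+1) - τ i') * bspline τ (d+1+1) i' s
              + (τ (i'+(d+1)+2) - s) / (τ (i'+(d+1)+2) - τ (i'+1)) * bspline τ (d+1+1) (i'+1) s := by
          simp only [bspline]
        rw [show d+1+2 = d+3 from by omega, show d+1+1 = d+2 from by omega,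
          show i'+(d+1)+1 = i'+d+2 from by omega, show i'+(d+1)+2 = i'+d+3 from by omega] at h
        exact h
      rw [show bspline τ (d+3) i' = (fun s => (s - τ i') / (τ (i'+d+2) - τ i') * bspline τ (d+2) i' s
            + (τ (i'+d+3) - s) / (τ (i'+d+3) - τ (i'+1)) * bspline τ (d+2) (i'+1) s) from funext hfe]
      refine hP.congr_deriv ?_
      have e0 : bspline τ (d+2) i' t = (t - τ i') / (τ (i'+d+1) - τ i') * bspline τ (d+1) i' t
          + (τ (i'+d+2) - t) / (τ (i'+d+2) - τ (i'+1)) * bspline τ (d+1) (i'+1) t := by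
        simp [bspline]
      have e1 : bspline τ (d+2) (i'+1) t = (t - τ (i'+1)) / (τ (i'+d+2) - τ (i'+1)) * bspline τ (d+1) (i'+1) t
          + (τ (i'+d+3) - t) / (τ (i'+d+3) - τ (i'+2)) * bspline τ (d+1) (i'+2) t := by
        have h : bspline τ (d+2) (i'+1) t
            = (t - τ (i'+1)) / (τ (i'+1+d+1) - τ (i'+1)) * bspline τ (d+1) (i'+1) t
              + (τ (i'+1+d+2) - t) / (τ (i'+1+d+2) - τ (i'+1+1)) * bspline τ (d+1) (i'+1+1) t := by
          simp only [bspline]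
        rw [show i'+1+d+1 = i'+d+2 from by omega, show i'+1+d+2 = i'+d+3 from by omega,
          show i'+1+1 = i'+2 from rfl] at h
        exact h
      rw [e0, e1]
      have d1 : τ (i'+d+1) - τ i' ≠ 0 := sub_ne_zero.2 (ne_of_gt (hlt i' (i'+d+1) (by omega) (by omega)))
      have d2 : τ (i'+d+2) - τ (i'+1) ≠ 0 := sub_ne_zero.2 (ne_of_gt (hlt (i'+1) (i'+d+2) (by omega) (by omega)))
      have d3 : τ (i'+d+3) - τ (i'+2) ≠ 0 := sub_ne_zero.2 (ne_of_gt (hlt (i'+2) (i'+d+3) (by omega) (by omega)))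
      have d4 : τ (i'+d+2) - τ i' ≠ 0 := sub_ne_zero.2 (ne_of_gt (hlt i' (i'+d+2) (by omega) (by omega)))
      have d5 : τ (i'+d+3) - τ (i'+1) ≠ 0 := sub_ne_zero.2 (ne_of_gt (hlt (i'+1) (i'+d+3) (by omega) (by omega)))
      push_cast
      clear hi0 hi1 e0 e1 him ih hne hlt ht hτ hP hfe hA hB
      generalize bspline τ (d+1) i' t = b0
      generalize bspline τ (d+1) (i'+1) t = b1
      generalize bspline τ (d+1) (i'+2) t = b2
      generalize hc : (d : ℝ) = c
      revert d1 d2 d3 d4 d5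
      generalize τ i' = A
      generalize τ (i'+1) = B
      generalize τ (i'+2) = C
      generalize τ (i'+d+1) = D
      generalize τ (i'+d+2) = E
      generalize τ (i'+d+3) = F
      intro d1 d2 d3 d4 d5
      field_simp
      ring
  obtain ⟨k, rfl⟩ : ∃ k, d = k + 2 := ⟨d - 2, by omega⟩
  have h := key k i (by omega)
  rw [show i + (k + 2) - 1 = i + k + 1 by omega]
  convert h using 2 <;> push_cast <;> ring_nf
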